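/- Let M be a Markov kernel on a countable set X satisfying the Doeblin minorization condition: there exist ε ∈ (0,1] and a probability mass function ν on X such that M(x,y) ≥ ε ν(y) for all x, y. Then M has a unique invariant probability mass function p, and for every starting state x and every K ≥ 1, ‖M^K(x,·) − p‖_TV ≤ (1 − ε)^K. -/

import Mathlib

/-- A probability mass function on a countable type. -/
def IsPMF {X : Type*} (p : X → ℝ) : Prop :=
  (∀ x, 0 ≤ p x) ∧ Summable p ∧ ∑' x, p x = 1

/-- `K`-fold composition of a Markov kernel on a countable space. -/
noncomputable def kernelPow {X : Type*} [DecidableEq X] (M : X → X → ℝ) : ℕ → X → X → ℝ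
  | 0 => fun x y => if y = x then 1 else 0
  | K + 1 => fun x y => ∑' z, M x z * kernelPow M K z y

/-- Total variation distance between pmfs: `(1/2) ∑ₓ |μ x − ν x|`. -/
noncomputable def tvDist {X : Type*} (μ ν : X → ℝ) : ℝ :=
  (1 / 2) * ∑' x, |μ x - ν x|

section Helpers

variable {X : Type*}

/-- evolve a measure by a kernel -/
noncomputable def mstep (N : X → X → ℝ) (μ : X → ℝ) (y : X) : ℝ := ∑' x, μ x * N x y

lemma pmf_le_one {p : X → ℝ} (hp : IsPMF p) (x : X) : p x ≤ 1 := by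
  rw [← hp.2.2]
  exact Summable.le_tsum hp.2.1 x (fun j _ => hp.1 j)

lemma summable_pair (μ : X → ℝ) (N : X → X → ℝ) (hμs : Summable μ) (hμ0 : ∀ x, 0 ≤ μ x)
    (hN : ∀ x, IsPMF (N x)) : Summable (fun q : X × X => μ q.1 * N q.1 q.2) := by
  apply (summable_prod_of_nonneg (fun q => mul_nonneg (hμ0 q.1) ((hN q.1).1 q.2))).2
  refine ⟨fun x => (hN x).2.1.mul_left (μ x), ?_⟩
  have : ∀ x : X, ∑' y, μ x * N x y = μ x := by
    intro x; rw [tsum_mul_left, (hN x).2.2, mul_one]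
  exact (summable_congr this).2 hμs

lemma summable_slice (μ : X → ℝ) (N : X → X → ℝ) (hμs : Summable μ) (hμ0 : ∀ x, 0 ≤ μ x)
    (hN : ∀ x, IsPMF (N x)) (y : X) : Summable (fun x => μ x * N x y) :=
  ((summable_pair μ N hμs hμ0 hN).prod_symm).prod_factor y

lemma summable_mstep (μ : X → ℝ) (N : X → X → ℝ) (hμs : Summable μ) (hμ0 : ∀ x, 0 ≤ μ x)
    (hN : ∀ x, IsPMF (N x)) : Summable (mstep N μ) :=
  ((summable_pair μ N hμs hμ0 hN).prod_symm).prod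

lemma tsum_mstep (μ : X → ℝ) (N : X → X → ℝ) (hμs : Summable μ) (hμ0 : ∀ x, 0 ≤ μ x)
    (hN : ∀ x, IsPMF (N x)) : ∑' y, mstep N μ y = ∑' x, μ x := by
  have h := Summable.tsum_comm (f := fun x y => μ x * N x y) (summable_pair μ N hμs hμ0 hN)
  calc ∑' y, mstep N μ y = ∑' (y) (x), μ x * N x y := rfl
    _ = ∑' (x) (y), μ x * N x y := h
    _ = ∑' x, μ x := by
        refine tsum_congr fun x => ?_
        rw [tsum_mul_left, (hN x).2.2, mul_one]

lemma mstep_isPMF {μ : X → ℝ} {N : X → X → ℝ} (hμ : IsPMF μ)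
    (hN : ∀ x, IsPMF (N x)) : IsPMF (mstep N μ) := by
  refine ⟨fun y => tsum_nonneg fun x => mul_nonneg (hμ.1 x) ((hN x).1 y),
    summable_mstep μ N hμ.2.1 hμ.1 hN, ?_⟩
  rw [tsum_mstep μ N hμ.2.1 hμ.1 hN, hμ.2.2]

/-- non-expansion of total ℓ¹-difference under a pmf kernel -/
lemma mstep_contract {μ₁ μ₂ : X → ℝ} {N : X → X → ℝ} (hμ₁ : IsPMF μ₁) (hμ₂ : IsPMF μ₂)
    (hN : ∀ x, IsPMF (N x)) :
    (Summable fun y => |mstep N μ₁ y - mstep N μ₂ y|) ∧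
      ∑' y, |mstep N μ₁ y - mstep N μ₂ y| ≤ ∑' x, |μ₁ x - μ₂ x| := by
  have hds : Summable fun x => |μ₁ x - μ₂ x| := (hμ₁.2.1.sub hμ₂.2.1).abs
  have hg : Summable (fun q : X × X => |μ₁ q.1 - μ₂ q.1| * N q.1 q.2) :=
    summable_pair (fun x => |μ₁ x - μ₂ x|) N hds (fun x => abs_nonneg _) hN
  have hdiff : ∀ y, |mstep N μ₁ y - mstep N μ₂ y| ≤ ∑' x, |μ₁ x - μ₂ x| * N x y := by
    intro y
    have h1 : mstep N μ₁ y - mstep N μ₂ y = ∑' x, (μ₁ x - μ₂ x) * N x y := by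
      unfold mstep
      rw [← Summable.tsum_sub (summable_slice μ₁ N hμ₁.2.1 hμ₁.1 hN y) (summable_slice μ₂ N hμ₂.2.1 hμ₂.1 hN y)]
      exact tsum_congr fun x => (sub_mul _ _ _).symm
    rw [h1]
    have h2 : ∀ x, ‖(μ₁ x - μ₂ x) * N x y‖ = |μ₁ x - μ₂ x| * N x y := by
      intro x
      rw [Real.norm_eq_abs, abs_mul, abs_of_nonneg ((hN x).1 y)]
    calc |∑' x, (μ₁ x - μ₂ x) * N x y| ≤ ∑' x, ‖(μ₁ x - μ₂ x) * N x y‖ :=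
          norm_tsum_le_tsum_norm (by
            rw [summable_congr h2]
            exact hg.prod_symm.prod_factor y)
      _ = ∑' x, |μ₁ x - μ₂ x| * N x y := tsum_congr h2
  have hsum2 : Summable fun y => ∑' x, |μ₁ x - μ₂ x| * N x y := hg.prod_symm.prod
  have hsum1 : Summable fun y => |mstep N μ₁ y - mstep N μ₂ y| :=
    Summable.of_nonneg_of_le (fun y => abs_nonneg _) hdiff hsum2
  refine ⟨hsum1, ?_⟩
  calc ∑' y, |mstep N μ₁ y - mstep N μ₂ y| ≤ ∑' (y) (x), |μ₁ x - μ₂ x| * N x y :=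
        Summable.tsum_le_tsum hdiff hsum1 hsum2
    _ = ∑' (x) (y), |μ₁ x - μ₂ x| * N x y :=
        Summable.tsum_comm (f := fun x y => |μ₁ x - μ₂ x| * N x y) hg
    _ = ∑' x, |μ₁ x - μ₂ x| := by
        refine tsum_congr fun x => ?_
        rw [tsum_mul_left, (hN x).2.2, mul_one]

lemma tvDist_le_one {μ₁ μ₂ : X → ℝ} (hμ₁ : IsPMF μ₁) (hμ₂ : IsPMF μ₂) :
    tvDist μ₁ μ₂ ≤ 1 := by
  have h : ∑' x, |μ₁ x - μ₂ x| ≤ 2 := by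
    have hb : ∀ x, |μ₁ x - μ₂ x| ≤ μ₁ x + μ₂ x := fun x =>
      abs_le.2 ⟨by linarith [hμ₁.1 x, hμ₂.1 x], by linarith [hμ₁.1 x, hμ₂.1 x]⟩
    calc ∑' x, |μ₁ x - μ₂ x| ≤ ∑' x, (μ₁ x + μ₂ x) :=
          Summable.tsum_le_tsum hb (hμ₁.2.1.sub hμ₂.2.1).abs (hμ₁.2.1.add hμ₂.2.1)
      _ = 2 := by rw [Summable.tsum_add hμ₁.2.1 hμ₂.2.1, hμ₁.2.2, hμ₂.2.2]; norm_num
  unfold tvDist; linarith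

end Helpers

section Doeblin

variable {X : Type*}

lemma mstep_decomp {M R : X → X → ℝ} {ν : X → ℝ} {ε : ℝ}
    (hR : ∀ x, IsPMF (R x)) (hdec : ∀ x y, M x y = ε * ν y + (1 - ε) * R x y)
    (μ : X → ℝ) (hμ : IsPMF μ) (y : X) :
    mstep M μ y = ε * ν y + (1 - ε) * mstep R μ y := by
  calc mstep M μ y = ∑' x, (μ x * (ε * ν y) + (1 - ε) * (μ x * R x y)) :=
        tsum_congr fun x => by show μ x * M x y = _; rw [hdec x y]; ring
    _ = (∑' x, μ x * (ε * ν y)) + ∑' x, (1 - ε) * (μ x * R x y) :=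
        Summable.tsum_add (hμ.2.1.mul_right _) ((summable_slice μ R hμ.2.1 hμ.1 hR y).mul_left _)
    _ = ε * ν y + (1 - ε) * mstep R μ y := by
        rw [tsum_mul_right, hμ.2.2, one_mul, tsum_mul_left]; rfl

lemma tv_contract {M R : X → X → ℝ} {ν : X → ℝ} {ε : ℝ}
    (hR : ∀ x, IsPMF (R x)) (hdec : ∀ x y, M x y = ε * ν y + (1 - ε) * R x y)
    (hε : 0 ≤ 1 - ε) (μ₁ μ₂ : X → ℝ) (hμ₁ : IsPMF μ₁) (hμ₂ : IsPMF μ₂) :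
    tvDist (mstep M μ₁) (mstep M μ₂) ≤ (1 - ε) * tvDist μ₁ μ₂ := by
  have hd : ∀ y, |mstep M μ₁ y - mstep M μ₂ y| = (1 - ε) * |mstep R μ₁ y - mstep R μ₂ y| := by
    intro y
    rw [mstep_decomp hR hdec μ₁ hμ₁ y, mstep_decomp hR hdec μ₂ hμ₂ y]
    have he : ε * ν y + (1 - ε) * mstep R μ₁ y - (ε * ν y + (1 - ε) * mstep R μ₂ y)
        = (1 - ε) * (mstep R μ₁ y - mstep R μ₂ y) := by ring
    rw [he, abs_mul, abs_of_nonneg hε]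
  have hcon := mstep_contract hμ₁ hμ₂ hR
  calc tvDist (mstep M μ₁) (mstep M μ₂)
      = (1 / 2) * ∑' y, (1 - ε) * |mstep R μ₁ y - mstep R μ₂ y| := by
        unfold tvDist; rw [tsum_congr hd]
    _ = (1 - ε) * ((1 / 2) * ∑' y, |mstep R μ₁ y - mstep R μ₂ y|) := by
        rw [tsum_mul_left]; ring
    _ ≤ (1 - ε) * tvDist μ₁ μ₂ := by
        apply mul_le_mul_of_nonneg_left _ hε
        unfold tvDist
        linarith [hcon.2]

end Doeblin


set_option maxHeartbeats 800000 in
/-- **Doeblin uniform-ergodicity theorem.** If a Markov kernel `M` on a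
countable space satisfies the minorization `M x y ≥ ε ν y` for all `x, y`,
for some `ε ∈ (0,1]` and pmf `ν`, then `M` has a unique invariant pmf `p`,
and `‖M^K(x,·) − p‖_TV ≤ (1 − ε)^K` for every `x` and `K ≥ 1`. -/
theorem doeblin_uniform_ergodicity
    {X : Type*} [Countable X] [DecidableEq X]
    (M : X → X → ℝ) (ν : X → ℝ) (ε : ℝ)
    (hM : ∀ x, IsPMF (M x)) (hν : IsPMF ν)
    (hε0 : 0 < ε) (hε1 : ε ≤ 1)
    (hdoeblin : ∀ x y, ε * ν y ≤ M x y) :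
    ∃ p : X → ℝ, IsPMF p ∧ (∀ y, ∑' x, p x * M x y = p y) ∧
      (∀ q : X → ℝ, IsPMF q → (∀ y, ∑' x, q x * M x y = q y) → q = p) ∧
      (∀ x, ∀ K : ℕ, 1 ≤ K → tvDist (kernelPow M K x) p ≤ (1 - ε) ^ K) := by
  have h1ε0 : (0:ℝ) ≤ 1 - ε := by linarith
  have h1ε1 : 1 - ε < 1 := by linarith
  -- Doeblin decomposition M = εν + (1-ε)R
  obtain ⟨R, hR, hdec⟩ : ∃ R : X → X → ℝ, (∀ x, IsPMF (R x)) ∧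
      ∀ x y, M x y = ε * ν y + (1 - ε) * R x y := by
    rcases eq_or_lt_of_le hε1 with h1 | h1
    · refine ⟨fun _ y => ν y, fun _ => hν, fun x y => ?_⟩
      have hMx : M x y = ν y := by
        have hsum : Summable fun y => M x y - ν y := (hM x).2.1.sub hν.2.1
        have htot : ∑' y, (M x y - ν y) = 0 := by
          rw [Summable.tsum_sub (hM x).2.1 hν.2.1, (hM x).2.2, hν.2.2]; ring
        have hnn : ∀ y, 0 ≤ M x y - ν y := by
          intro y
          have h2 := hdoeblin x y
          rw [h1, one_mul] at h2
          linarith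
        have h3 := Summable.le_tsum hsum y (fun j _ => hnn j)
        rw [htot] at h3
        have := hnn y
        linarith
      rw [hMx, h1]; ring
    · have hdpos : (0:ℝ) < 1 - ε := by linarith
      refine ⟨fun x y => (M x y - ε * ν y) / (1 - ε), fun x => ⟨?_, ?_, ?_⟩, fun x y => ?_⟩
      · intro y; exact div_nonneg (by linarith [hdoeblin x y]) hdpos.le
      · exact ((hM x).2.1.sub (hν.2.1.mul_left ε)).div_const _
      · rw [tsum_div_const, Summable.tsum_sub (hM x).2.1 (hν.2.1.mul_left ε), (hM x).2.2,
          tsum_mul_left, hν.2.2, mul_one]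
        field_simp
      · field_simp; ring
  have hcontr : ∀ μ₁ μ₂ : X → ℝ, IsPMF μ₁ → IsPMF μ₂ →
      tvDist (mstep M μ₁) (mstep M μ₂) ≤ (1 - ε) * tvDist μ₁ μ₂ :=
    fun μ₁ μ₂ h₁ h₂ => tv_contract (M := M) (R := R) (ν := ν) (ε := ε) hR hdec h1ε0 μ₁ μ₂ h₁ h₂
  -- the sequence ν R^k
  set νk : ℕ → X → ℝ := fun k => (mstep R)^[k] ν with hνkdef
  have hνk0 : νk 0 = ν := rfl
  have hνks : ∀ k, νk (k + 1) = mstep R (νk k) := by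
    intro k
    simp only [hνkdef]
    exact Function.iterate_succ_apply' _ _ _
  have hνkpmf : ∀ k, IsPMF (νk k) := by
    intro k; induction k with
    | zero => exact hν
    | succ k ih => rw [hνks]; exact mstep_isPMF ih hR
  have hcs : Summable (fun k : ℕ => ε * (1 - ε) ^ k) :=
    (summable_geometric_of_lt_one h1ε0 h1ε1).mul_left ε
  have hcnn : ∀ k : ℕ, 0 ≤ ε * (1 - ε) ^ k := fun k => mul_nonneg hε0.le (pow_nonneg h1ε0 k)
  have hctot : ∑' k : ℕ, ε * (1 - ε) ^ k = 1 := by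
    rw [tsum_mul_left, tsum_geometric_of_lt_one h1ε0 h1ε1]
    have h2 : 1 - (1 - ε) = ε := by ring
    rw [h2, mul_inv_cancel₀ hε0.ne']
  have hGpair : Summable (fun q : ℕ × X => ε * (1 - ε) ^ q.1 * νk q.1 q.2) := by
    apply (summable_prod_of_nonneg
      (fun q => mul_nonneg (hcnn q.1) ((hνkpmf q.1).1 q.2))).2
    refine ⟨fun k => ((hνkpmf k).2.1.mul_left (ε * (1 - ε) ^ k)), ?_⟩
    have he : ∀ k : ℕ, ∑' y, ε * (1 - ε) ^ k * νk k y = ε * (1 - ε) ^ k := by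
      intro k; rw [tsum_mul_left, (hνkpmf k).2.2, mul_one]
    exact (summable_congr he).2 hcs
  -- the candidate invariant measure
  set p : X → ℝ := fun y => ∑' k : ℕ, ε * (1 - ε) ^ k * νk k y with hpdef
  have hppmf : IsPMF p := by
    refine ⟨fun y => tsum_nonneg fun k => mul_nonneg (hcnn k) ((hνkpmf k).1 y),
      hGpair.prod_symm.prod, ?_⟩
    calc ∑' y, p y = ∑' (y) (k : ℕ), ε * (1 - ε) ^ k * νk k y := by simp only [hpdef]
      _ = ∑' (k : ℕ) (y), ε * (1 - ε) ^ k * νk k y :=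
          Summable.tsum_comm (f := fun (k : ℕ) y => ε * (1 - ε) ^ k * νk k y) hGpair
      _ = ∑' k : ℕ, ε * (1 - ε) ^ k :=
          tsum_congr fun k => by rw [tsum_mul_left, (hνkpmf k).2.2, mul_one]
      _ = 1 := hctot
  -- computing mstep R p
  have hstepRp : ∀ y, mstep R p y = ∑' k : ℕ, ε * (1 - ε) ^ k * νk (k + 1) y := by
    intro y
    have hH : Summable (fun q : ℕ × X => ε * (1 - ε) ^ q.1 * (νk q.1 q.2 * R q.2 y)) := by
      apply (summable_prod_of_nonneg (fun q => mul_nonneg (hcnn q.1)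
        (mul_nonneg ((hνkpmf q.1).1 q.2) ((hR q.2).1 y)))).2
      constructor
      · intro k
        exact (summable_slice (νk k) R (hνkpmf k).2.1 (hνkpmf k).1 hR y).mul_left (ε * (1 - ε) ^ k)
      · have he : ∀ k : ℕ, ∑' x, ε * (1 - ε) ^ k * (νk k x * R x y)
            = ε * (1 - ε) ^ k * mstep R (νk k) y := by
          intro k; rw [tsum_mul_left]; rfl
        rw [summable_congr he]
        apply Summable.of_nonneg_of_le _ _ hcs
        · intro k
          exact mul_nonneg (hcnn k) ((mstep_isPMF (hνkpmf k) hR).1 y)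
        · intro k
          exact mul_le_of_le_one_right (hcnn k) (pmf_le_one (mstep_isPMF (hνkpmf k) hR) y)
    calc mstep R p y
        = ∑' (x) (k : ℕ), ε * (1 - ε) ^ k * (νk k x * R x y) := by
          refine tsum_congr fun x => ?_
          show p x * R x y = _
          simp only [hpdef]
          rw [← tsum_mul_right]
          exact tsum_congr fun k => (mul_assoc _ _ _)
      _ = ∑' (k : ℕ) (x), ε * (1 - ε) ^ k * (νk k x * R x y) :=
          Summable.tsum_comm (f := fun (k : ℕ) x => ε * (1 - ε) ^ k * (νk k x * R x y)) hH
      _ = ∑' k : ℕ, ε * (1 - ε) ^ k * νk (k + 1) y := by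
          refine tsum_congr fun k => ?_
          rw [tsum_mul_left, hνks k]; rfl
  -- p is a fixed point
  have hpfix : mstep M p = p := by
    funext y
    rw [mstep_decomp hR hdec p hppmf y, hstepRp y, ← tsum_mul_left]
    have h2 : ∀ k : ℕ, (1 - ε) * (ε * (1 - ε) ^ k * νk (k + 1) y)
        = ε * (1 - ε) ^ (k + 1) * νk (k + 1) y := fun k => by ring
    rw [tsum_congr h2]
    have hsk : Summable (fun k : ℕ => ε * (1 - ε) ^ k * νk k y) := by
      apply Summable.of_nonneg_of_le _ _ hcs
      · intro k; exact mul_nonneg (hcnn k) ((hνkpmf k).1 y)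
      · intro k; exact mul_le_of_le_one_right (hcnn k) (pmf_le_one (hνkpmf k) y)
    have hzero := Summable.tsum_eq_zero_add hsk
    show ε * ν y + ∑' k : ℕ, ε * (1 - ε) ^ (k + 1) * νk (k + 1) y = p y
    simp only [hpdef]
    rw [hzero, pow_zero, mul_one, hνk0]
  -- rows of kernelPow are pmfs
  have hKpmf : ∀ K (x : X), IsPMF (kernelPow M K x) := by
    intro K; induction K with
    | zero =>
      intro x
      have e0 : kernelPow M 0 x = fun y => if y = x then (1:ℝ) else 0 := rfl
      rw [e0]
      refine ⟨fun y => ?_, (hasSum_ite_eq x (1:ℝ)).summable, (hasSum_ite_eq x (1:ℝ)).tsum_eq⟩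
      by_cases h : y = x <;> simp [h]
    | succ K ih =>
      intro x
      have e1 : kernelPow M (K + 1) x = mstep (kernelPow M K) (M x) := rfl
      rw [e1]
      exact mstep_isPMF (hM x) ih
  -- kernel powers commute with one application of M
  have hcomm : ∀ K (x : X), kernelPow M (K + 1) x = mstep M (kernelPow M K x) := by
    intro K; induction K with
    | zero =>
      intro x; funext y
      show ∑' z, M x z * (if y = z then (1:ℝ) else 0)
        = ∑' z, (if z = x then (1:ℝ) else 0) * M z y
      have l : ∑' z, M x z * (if y = z then (1:ℝ) else 0) = M x y := by
        rw [tsum_congr (g := fun z => if z = y then M x y else 0) ?_, tsum_ite_eq y (fun _ => M x y)]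
        intro z
        rcases eq_or_ne z y with h | h
        · subst h; simp
        · simp [h, Ne.symm h]
      have r : ∑' z, (if z = x then (1:ℝ) else 0) * M z y = M x y := by
        rw [tsum_congr (g := fun z => if z = x then M x y else 0) ?_, tsum_ite_eq x (fun _ => M x y)]
        intro z
        rcases eq_or_ne z x with h | h
        · subst h; simp
        · simp [h]
      rw [l, r]
    | succ K ih =>
      intro x; funext y
      have F : Summable (fun q : X × X => M x q.1 * (kernelPow M K q.1 q.2 * M q.2 y)) := by
        apply (summable_prod_of_nonneg (fun q => mul_nonneg ((hM x).1 q.1)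
          (mul_nonneg ((hKpmf K q.1).1 q.2) ((hM q.2).1 y)))).2
        constructor
        · intro z
          exact (summable_slice (kernelPow M K z) M (hKpmf K z).2.1 (hKpmf K z).1 hM y).mul_left (M x z)
        · have he : ∀ z, ∑' w, M x z * (kernelPow M K z w * M w y)
              = M x z * mstep M (kernelPow M K z) y := by
            intro z; rw [tsum_mul_left]; rfl
          rw [summable_congr he]
          apply Summable.of_nonneg_of_le _ _ (hM x).2.1
          · intro z
            exact mul_nonneg ((hM x).1 z) ((mstep_isPMF (hKpmf K z) hM).1 y)
          · intro z
            exact mul_le_of_le_one_right ((hM x).1 z) (pmf_le_one (mstep_isPMF (hKpmf K z) hM) y)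
      calc kernelPow M (K + 2) x y
          = ∑' z, M x z * kernelPow M (K + 1) z y := rfl
        _ = ∑' (z) (w), M x z * (kernelPow M K z w * M w y) := by
            refine tsum_congr fun z => ?_
            rw [ih z]
            rw [tsum_mul_left]
            rfl
        _ = ∑' (w) (z), M x z * (kernelPow M K z w * M w y) :=
            (Summable.tsum_comm (f := fun z w => M x z * (kernelPow M K z w * M w y)) F).symm
        _ = ∑' w, kernelPow M (K + 1) x w * M w y := by
            refine tsum_congr fun w => ?_
            show _ = (∑' z, M x z * kernelPow M K z w) * M w y
            rw [← tsum_mul_right]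
            exact tsum_congr fun z => (mul_assoc _ _ _).symm
        _ = mstep M (kernelPow M (K + 1) x) y := rfl
  -- the TV bound
  have htv : ∀ (x : X) (K : ℕ), tvDist (kernelPow M K x) p ≤ (1 - ε) ^ K := by
    intro x K; induction K with
    | zero => simpa using tvDist_le_one (hKpmf 0 x) hppmf
    | succ K ih =>
      rw [hcomm K x]
      calc tvDist (mstep M (kernelPow M K x)) p
          = tvDist (mstep M (kernelPow M K x)) (mstep M p) := by rw [hpfix]
        _ ≤ (1 - ε) * tvDist (kernelPow M K x) p := hcontr _ _ (hKpmf K x) hppmf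
        _ ≤ (1 - ε) * (1 - ε) ^ K := mul_le_mul_of_nonneg_left ih h1ε0
        _ = (1 - ε) ^ (K + 1) := by ring
  -- uniqueness
  have huniq : ∀ q : X → ℝ, IsPMF q → (∀ y, ∑' x, q x * M x y = q y) → q = p := by
    intro q hq hinv
    have hqfix : mstep M q = q := funext hinv
    have h := hcontr q p hq hppmf
    rw [hqfix, hpfix] at h
    have hnn : 0 ≤ tvDist q p := by
      unfold tvDist
      have := tsum_nonneg (L := SummationFilter.unconditional X) (fun x => abs_nonneg (q x - p x))
      linarith
    have htv0 : tvDist q p = 0 := by nlinarith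
    have habs0 : ∑' x, |q x - p x| = 0 := by
      unfold tvDist at htv0; linarith
    funext x
    have hs : Summable fun x => |q x - p x| := (hq.2.1.sub hppmf.2.1).abs
    have h3 := Summable.le_tsum hs x (fun j _ => abs_nonneg _)
    rw [habs0] at h3
    have h4 : |q x - p x| = 0 := le_antisymm h3 (abs_nonneg _)
    have h5 := abs_eq_zero.1 h4
    exact sub_eq_zero.1 h5
  exact ⟨p, hppmf, fun y => congrFun hpfix y, huniq, fun x K _ => htv x K⟩
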